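/- For all real numbers λ with 0 ≤ λ ≤ 1 and all real s, κ with 0 < s ≤ κ ≤ 1, it holds that 0 ≤ ((s+κ)/s)(1−λ^s) ≤ λ^{−κ}, where for λ = 0 the right-hand side is interpreted as +∞ (so the inequality trivially holds); equivalently, for λ ∈ (0,1]: ((s+κ)/s)(1−λ^s) ≤ λ^{−κ}. -/

import Mathlib

/-- For `λ ∈ (0,1]`, `0 < s ≤ κ ≤ 1`: `0 ≤ ((s+κ)/s)(1−λ^s) ≤ λ^{−κ}`. -/
theorem stmt5 (lam s kappa : ℝ) (hlam : lam ∈ Set.Ioc (0 : ℝ) 1)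
    (hs : 0 < s) (hsk : s ≤ kappa) (hk : kappa ≤ 1) :
    0 ≤ (s + kappa) / s * (1 - lam ^ s) ∧
      (s + kappa) / s * (1 - lam ^ s) ≤ lam ^ (-kappa) := by
  obtain ⟨hl0, hl1⟩ := hlam
  have hk0 : 0 < kappa := lt_of_lt_of_le hs hsk
  have hpow : lam ^ s ≤ 1 := Real.rpow_le_one hl0.le hl1 hs.le
  have hdiv : 0 ≤ (s + kappa) / s := by positivity
  constructor
  · exact mul_nonneg hdiv (by linarith)
  · set t := -Real.log lam with ht
    have ht0 : 0 ≤ t := by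
      have := Real.log_nonpos hl0.le hl1
      simp [ht]; linarith
    have h1 : 1 - lam ^ s ≤ s * t := by
      have h := Real.add_one_le_exp (Real.log lam * s)
      rw [Real.rpow_def_of_pos hl0]
      simp only [ht]
      nlinarith
    have h2 : lam ^ (-kappa) = Real.exp (kappa * t) := by
      rw [Real.rpow_def_of_pos hl0]
      rw [ht]; congr 1; ring
    have h3 : 2 * (kappa * t) ≤ Real.exp (kappa * t) := by
      have he : Real.exp (kappa * t) = Real.exp (kappa * t - 1) * Real.exp 1 := by
        rw [← Real.exp_add]; ring_nf
      have h4 := Real.add_one_le_exp (kappa * t - 1)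
      have h5 : (2.7182818283 : ℝ) < Real.exp 1 := Real.exp_one_gt_d9
      have h6 : 0 < Real.exp (kappa * t - 1) := Real.exp_pos _
      nlinarith [mul_nonneg (mul_nonneg hk0.le ht0) (Real.exp_pos (kappa*t-1)).le]
    have h7 : (s + kappa) / s * (1 - lam ^ s) ≤ (s + kappa) / s * (s * t) :=
      mul_le_mul_of_nonneg_left h1 hdiv
    have h8 : (s + kappa) / s * (s * t) = (s + kappa) * t := by
      field_simp
    rw [h2]
    nlinarith [mul_le_mul_of_nonneg_right hsk ht0]
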